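/- arXiv:2406.05964 — 2 statements merged into one kernel-verified Lean document; each statement's English description precedes it below -/
import Mathlib

section
/- Under the setting of weighted regularized empirical risk minimization with κ-strongly convex ρ, if the interval [X̌_{i:}β̂ − ‖X̌_{i:}‖₂·r, X̌_{i:}β̂ + ‖X̌_{i:}‖₂·r] is contained in the set Z[ℓ_{y_i}] := {t : ∂ℓ_{y_i}(t) = {0}}, where r = √((2/κ)(P_w(β̂) − D_w(α̂))), then the dual optimum satisfies α_i* = 0. -/
/-- Subdifferential of a function `ℝ → ℝ`. -/
def subd (f : ℝ → ℝ) (t : ℝ) : Set ℝ :=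
  {g | ∀ t', f t' - f t ≥ g * (t' - t)}

/-- The set `Z[ℓ] = {t : ∂ℓ(t) = {0}}`. -/
def Zset (f : ℝ → ℝ) : Set ℝ :=
  {t | subd f t = {0}}

/-- Convex conjugate of a function `ℝ → ℝ`, with values in the extended reals. -/
noncomputable def conj (f : ℝ → ℝ) (s : ℝ) : EReal :=
  ⨆ t : ℝ, ((s * t - f t : ℝ) : EReal)

/-- Convex conjugate of a function on `ℝ^d`, with values in the extended reals. -/
noncomputable def conjV {d : ℕ} (ρ : EuclideanSpace ℝ (Fin d) → ℝ)
    (v : EuclideanSpace ℝ (Fin d)) : EReal :=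
  ⨆ β : EuclideanSpace ℝ (Fin d), (((inner ℝ v β : ℝ) - ρ β : ℝ) : EReal)

/-- Primal objective of weighted regularized empirical risk minimization. -/
noncomputable def Pobj {n d : ℕ} (ℓ : Fin n → ℝ → ℝ) (ρ : EuclideanSpace ℝ (Fin d) → ℝ)
    (X : Fin n → EuclideanSpace ℝ (Fin d)) (w : Fin n → ℝ)
    (β : EuclideanSpace ℝ (Fin d)) : ℝ :=
  (∑ i, w i * ℓ i (inner ℝ (X i) β)) + ρ β

/-- Dual objective of weighted regularized empirical risk minimization. -/
noncomputable def Dobj {n d : ℕ} (ℓ : Fin n → ℝ → ℝ) (ρ : EuclideanSpace ℝ (Fin d) → ℝ)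
    (X : Fin n → EuclideanSpace ℝ (Fin d)) (w : Fin n → ℝ) (α : Fin n → ℝ) : EReal :=
  -(∑ i, (w i : EReal) * conj (ℓ i) (-(α i))) - conjV ρ (∑ i, (w i * α i) • X i)

lemma ecoe_sum {ι : Type*} (s : Finset ι) (f : ι → ℝ) :
    ((∑ i ∈ s, f i : ℝ) : EReal) = ∑ i ∈ s, ((f i : ℝ) : EReal) :=
  map_sum (⟨⟨(Real.toEReal), EReal.coe_zero⟩, EReal.coe_add⟩ : ℝ →+ EReal) f s

/-- Weak duality. -/
theorem weak_duality' {n d : ℕ} (ℓ : Fin n → ℝ → ℝ) (ρ : EuclideanSpace ℝ (Fin d) → ℝ)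
    (X : Fin n → EuclideanSpace ℝ (Fin d)) (w : Fin n → ℝ) (hw : ∀ i, 0 ≤ w i)
    (α : Fin n → ℝ) (β : EuclideanSpace ℝ (Fin d)) :
    Dobj ℓ ρ X w α ≤ ((Pobj ℓ ρ X w β : ℝ) : EReal) := by
  set t : Fin n → ℝ := fun i => (inner ℝ (X i) β : ℝ) with ht
  set v : EuclideanSpace ℝ (Fin d) := ∑ i, (w i * α i) • X i with hv
  have h1 : ((∑ i, w i * (-(α i) * t i - ℓ i (t i)) : ℝ) : EReal) ≤
      ∑ i, (w i : EReal) * conj (ℓ i) (-(α i)) := by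
    rw [ecoe_sum]
    refine Finset.sum_le_sum fun i _ => ?_
    calc ((w i * (-(α i) * t i - ℓ i (t i)) : ℝ) : EReal)
        = (w i : EReal) * ((-(α i) * t i - ℓ i (t i) : ℝ) : EReal) := by
          rw [← EReal.coe_mul]
      _ ≤ (w i : EReal) * conj (ℓ i) (-(α i)) := by
          refine mul_le_mul_of_nonneg_left ?_ (by exact_mod_cast hw i)
          exact le_iSup (fun s => ((-(α i) * s - ℓ i s : ℝ) : EReal)) (t i)
  have h2 : (((inner ℝ v β : ℝ) - ρ β : ℝ) : EReal) ≤ conjV ρ v :=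
    le_iSup (fun b => (((inner ℝ v b : ℝ) - ρ b : ℝ) : EReal)) β
  have hvβ : (inner ℝ v β : ℝ) = ∑ i, w i * α i * t i := by
    rw [hv, sum_inner]
    exact Finset.sum_congr rfl fun i _ => real_inner_smul_left _ _ _
  have key := EReal.sub_le_sub (EReal.neg_le_neg_iff.2 h1) h2
  rw [Dobj]
  refine le_trans key ?_
  rw [← EReal.coe_neg, ← EReal.coe_sub, EReal.coe_le_coe_iff, hvβ, Pobj]
  have : (∑ i, w i * ℓ i (t i)) + ρ β
      = -(∑ i, w i * (-(α i) * t i - ℓ i (t i))) - ((∑ i, w i * α i * t i) - ρ β) := by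
    rw [← Finset.sum_neg_distrib]
    have h3 : ∑ x, -(w x * (-(α x) * t x - ℓ x (t x)))
        = ∑ x, (w x * ℓ x (t x) + w x * α x * t x) :=
      Finset.sum_congr rfl fun i _ => by ring
    rw [h3, Finset.sum_add_distrib]
    ring
  rw [this]

lemma norm_combo' {E : Type*} [NormedAddCommGroup E] [InnerProductSpace ℝ E]
    (a b : E) (s : ℝ) :
    ‖(1 - s) • a + s • b‖ ^ 2
      = (1 - s) * ‖a‖ ^ 2 + s * ‖b‖ ^ 2 - s * (1 - s) * ‖b - a‖ ^ 2 := by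
  simp only [← real_inner_self_eq_norm_sq, inner_add_left, inner_add_right, inner_sub_left,
    inner_sub_right, real_inner_smul_left, real_inner_smul_right]
  rw [real_inner_comm b a]
  ring

/-- Strong convexity of the primal objective around its minimizer. -/
theorem strong_conv' {n d : ℕ} (κ : ℝ)
    (ℓ : Fin n → ℝ → ℝ) (hℓ : ∀ i, ConvexOn ℝ Set.univ (ℓ i))
    (ρ : EuclideanSpace ℝ (Fin d) → ℝ)
    (hρ : ConvexOn ℝ Set.univ (fun β => ρ β - κ / 2 * ‖β‖ ^ 2))
    (w : Fin n → ℝ) (hw : ∀ i, 0 ≤ w i)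
    (X : Fin n → EuclideanSpace ℝ (Fin d))
    (βstar : EuclideanSpace ℝ (Fin d)) (hmin : ∀ β, Pobj ℓ ρ X w βstar ≤ Pobj ℓ ρ X w β)
    (β : EuclideanSpace ℝ (Fin d)) :
    Pobj ℓ ρ X w βstar + κ / 2 * ‖β - βstar‖ ^ 2 ≤ Pobj ℓ ρ X w β := by
  have hsum : ConvexOn ℝ Set.univ (fun β => ∑ i, w i * ℓ i (inner ℝ (X i) β)) := by
    refine ⟨convex_univ, fun x _ y _ a b ha hb hab => ?_⟩
    simp only
    rw [Finset.smul_sum, Finset.smul_sum, ← Finset.sum_add_distrib]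
    refine Finset.sum_le_sum fun i _ => ?_
    have hin : (inner ℝ (X i) (a • x + b • y) : ℝ)
        = a * (inner ℝ (X i) x : ℝ) + b * (inner ℝ (X i) y : ℝ) := by
      rw [inner_add_right, real_inner_smul_right, real_inner_smul_right]
    rw [hin]
    have := (hℓ i).2 (Set.mem_univ ((inner ℝ (X i) x : ℝ))) (Set.mem_univ ((inner ℝ (X i) y : ℝ)))
      ha hb hab
    simp only [smul_eq_mul] at this ⊢
    calc w i * ℓ i (a * (inner ℝ (X i) x : ℝ) + b * (inner ℝ (X i) y : ℝ))
        ≤ w i * (a * ℓ i (inner ℝ (X i) x) + b * ℓ i (inner ℝ (X i) y)) := by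
          exact mul_le_mul_of_nonneg_left this (hw i)
      _ = a * (w i * ℓ i (inner ℝ (X i) x)) + b * (w i * ℓ i (inner ℝ (X i) y)) := by ring
  have hf : ConvexOn ℝ Set.univ
      (fun β => Pobj ℓ ρ X w β - κ / 2 * ‖β‖ ^ 2) := by
    have h := hsum.add hρ
    have he : (fun β => Pobj ℓ ρ X w β - κ / 2 * ‖β‖ ^ 2)
        = ((fun β => ∑ i, w i * ℓ i (inner ℝ (X i) β)) + fun β => ρ β - κ / 2 * ‖β‖ ^ 2) := by
      funext β
      simp only [Pobj, Pi.add_apply]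
      ring
    rw [he]; exact h
  set F : EuclideanSpace ℝ (Fin d) → ℝ := fun β => Pobj ℓ ρ X w β - κ / 2 * ‖β‖ ^ 2 with hF
  set dd : ℝ := ‖β - βstar‖ ^ 2 with hdd
  have hdd0 : 0 ≤ dd := by positivity
  have key : ∀ s : ℝ, 0 < s → s ≤ 1 →
      κ / 2 * dd ≤ (Pobj ℓ ρ X w β - Pobj ℓ ρ X w βstar) + κ / 2 * dd * s := by
    intro s hs hs1
    have ha : (0:ℝ) ≤ 1 - s := by linarith
    have hconv := hf.2 (Set.mem_univ βstar) (Set.mem_univ β) ha hs.le (by ring)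
    simp only [smul_eq_mul, hF] at hconv
    have hmin' := hmin ((1 - s) • βstar + s • β)
    have hnorm := norm_combo' βstar β s
    rw [hnorm] at hconv
    have hs' : s * (κ / 2 * dd) ≤
        s * ((Pobj ℓ ρ X w β - Pobj ℓ ρ X w βstar) + κ / 2 * dd * s) := by
      rw [hdd]
      nlinarith [hconv, hmin']
    exact le_of_mul_le_mul_left hs' hs
  refine le_of_forall_pos_le_add fun ε hε => ?_
  rcases le_or_gt 0 (κ / 2 * dd) with hc | hc
  · set s : ℝ := min 1 (ε / (κ / 2 * dd + 1)) with hsdef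
    have hs0 : 0 < s := lt_min one_pos (div_pos hε (by linarith))
    have hs1 : s ≤ 1 := min_le_left _ _
    have := key s hs0 hs1
    have hbound : κ / 2 * dd * s ≤ ε := by
      have h1 : s ≤ ε / (κ / 2 * dd + 1) := min_le_right _ _
      have h2 : κ / 2 * dd * s ≤ (κ / 2 * dd + 1) * (ε / (κ / 2 * dd + 1)) := by
        have := mul_le_mul (le_refl (κ / 2 * dd + 1)) h1 hs0.le (by linarith)
        nlinarith [mul_le_mul_of_nonneg_left h1 hc]
      rw [mul_div_cancel₀] at h2
      · linarith
      · linarith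
    linarith
  · have := key 1 one_pos le_rfl
    nlinarith

/-- Gap safe sample screening rule: if the interval
`[X̌ᵢβ̂ - ‖X̌ᵢ‖r, X̌ᵢβ̂ + ‖X̌ᵢ‖r]` with `r = √((2/κ)(P_w(β̂) - D_w(α̂)))` is contained in
`Z[ℓ_{yᵢ}]`, then the dual optimum (characterized by the KKT condition) satisfies `αᵢ* = 0`. -/
theorem stmt4 {n d : ℕ} (κ : ℝ) (hκ : 0 < κ)
    (ℓ : Fin n → ℝ → ℝ) (hℓ : ∀ i, ConvexOn ℝ Set.univ (ℓ i))
    (ρ : EuclideanSpace ℝ (Fin d) → ℝ)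
    (hρ : ConvexOn ℝ Set.univ (fun β => ρ β - κ / 2 * ‖β‖ ^ 2))
    (w : Fin n → ℝ) (hw : ∀ i, 0 ≤ w i)
    (X : Fin n → EuclideanSpace ℝ (Fin d))
    (βstar : EuclideanSpace ℝ (Fin d)) (hmin : ∀ β, Pobj ℓ ρ X w βstar ≤ Pobj ℓ ρ X w β)
    (bhat : EuclideanSpace ℝ (Fin d)) (ahat : Fin n → ℝ)
    (i : Fin n) (r : ℝ) (hr0 : 0 ≤ r)
    (hr : ((r ^ 2 : ℝ) : EReal) =
      ((2 / κ : ℝ) : EReal) * (((Pobj ℓ ρ X w bhat : ℝ) : EReal) - Dobj ℓ ρ X w ahat))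
    (hsub : Set.Icc ((inner ℝ (X i) bhat : ℝ) - ‖X i‖ * r) ((inner ℝ (X i) bhat : ℝ) + ‖X i‖ * r)
      ⊆ Zset (ℓ i))
    (αstar : Fin n → ℝ)
    (hKKT : ∀ j, -(αstar j) ∈ subd (ℓ j) ((inner ℝ (X j) βstar : ℝ))) :
    αstar i = 0 := by
  have hwd := weak_duality' ℓ ρ X w hw ahat βstar
  -- extract a real dual value
  have hne_bot : Dobj ℓ ρ X w ahat ≠ ⊥ := by
    intro hD
    rw [hD, EReal.coe_sub_bot, EReal.mul_top_of_pos (by exact_mod_cast div_pos two_pos hκ)]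
      at hr
    exact EReal.coe_ne_top _ hr
  have hne_top : Dobj ℓ ρ X w ahat ≠ ⊤ := by
    intro hD
    rw [hD] at hwd
    exact (EReal.coe_lt_top _).not_ge (le_trans le_top hwd)
  obtain ⟨dv, hdv⟩ : ∃ dv : ℝ, Dobj ℓ ρ X w ahat = (dv : EReal) :=
    ⟨(Dobj ℓ ρ X w ahat).toReal, (EReal.coe_toReal hne_top hne_bot).symm⟩
  rw [hdv] at hr hwd
  rw [← EReal.coe_sub, ← EReal.coe_mul, EReal.coe_eq_coe_iff] at hr
  rw [EReal.coe_le_coe_iff] at hwd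
  -- gap sphere: ‖bhat - βstar‖ ≤ r
  have hsc := strong_conv' κ ℓ hℓ ρ hρ w hw X βstar hmin bhat
  have hr' : κ * r ^ 2 = 2 * (Pobj ℓ ρ X w bhat - dv) := by
    rw [hr]
    field_simp
  have hgap : κ / 2 * ‖bhat - βstar‖ ^ 2 ≤ κ / 2 * r ^ 2 := by
    linarith [hsc, hwd, hr']
  have hball : ‖bhat - βstar‖ ≤ r := by
    have h1 : ‖bhat - βstar‖ ^ 2 ≤ r ^ 2 := by
      have hκ2 : (0:ℝ) < κ / 2 := by positivity
      exact le_of_mul_le_mul_left hgap hκ2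
    nlinarith [h1, hr0, norm_nonneg (bhat - βstar)]
  -- the optimal point is in the interval
  have hmem : (inner ℝ (X i) βstar : ℝ) ∈
      Set.Icc ((inner ℝ (X i) bhat : ℝ) - ‖X i‖ * r) ((inner ℝ (X i) bhat : ℝ) + ‖X i‖ * r) := by
    have hdiff : |(inner ℝ (X i) βstar : ℝ) - (inner ℝ (X i) bhat : ℝ)| ≤ ‖X i‖ * r := by
      have : (inner ℝ (X i) βstar : ℝ) - (inner ℝ (X i) bhat : ℝ)
          = (inner ℝ (X i) (βstar - bhat) : ℝ) := by rw [inner_sub_right]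
      rw [this]
      calc |(inner ℝ (X i) (βstar - bhat) : ℝ)| ≤ ‖X i‖ * ‖βstar - bhat‖ :=
            abs_real_inner_le_norm _ _
        _ ≤ ‖X i‖ * r := by
            rw [norm_sub_rev]
            exact mul_le_mul_of_nonneg_left hball (norm_nonneg _)
    rw [abs_le] at hdiff
    constructor <;> linarith [hdiff.1, hdiff.2]
  have hz := hsub hmem
  have h0 := hKKT i
  rw [Zset, Set.mem_setOf_eq] at hz
  rw [hz, Set.mem_singleton_iff] at h0
  linarith [h0, neg_eq_zero.mp h0]
end

section
/- Let f: ℝ^n → ℝ and g: ℝ^d → ℝ be (finite-valued) convex functions and A ∈ ℝ^{n×d}. Then min_{v ∈ ℝ^d} [f(Av) + g(v)] = max_{u ∈ ℝ^n} [−f*(−u) − g*(A⊤u)], provided both optima are attained; furthermore at the optima v*, u*, one has −u* ∈ ∂f(Av*) and v* ∈ ∂g*(A⊤u*). -/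
open Matrix

/-- Convex conjugate of a function on `ℝ^m` (with the dot product pairing),
with values in the extended reals. -/
noncomputable def conjP {m : ℕ} (f : (Fin m → ℝ) → ℝ) (s : Fin m → ℝ) : EReal :=
  ⨆ x : Fin m → ℝ, (((∑ i, s i * x i) - f x : ℝ) : EReal)

/-- Subdifferential of a real-valued function on `ℝ^m`. -/
def subdR {m : ℕ} (f : (Fin m → ℝ) → ℝ) (x : Fin m → ℝ) : Set (Fin m → ℝ) :=
  {g | ∀ x', f x' - f x ≥ ∑ i, g i * (x' i - x i)}

/-- Subdifferential of an extended-real-valued function on `ℝ^m`. -/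
def subdE {m : ℕ} (F : (Fin m → ℝ) → EReal) (x : Fin m → ℝ) : Set (Fin m → ℝ) :=
  {s | ∀ x', F x + ((∑ i, s i * (x' i - x i) : ℝ) : EReal) ≤ F x'}

lemma conjP_ge {m : ℕ} (f : (Fin m → ℝ) → ℝ) (s x : Fin m → ℝ) :
    (((∑ i, s i * x i) - f x : ℝ) : EReal) ≤ conjP f s := by
  exact le_iSup (fun x : Fin m → ℝ => (((∑ i, s i * x i) - f x : ℝ) : EReal)) x

lemma conjP_le {m : ℕ} {f : (Fin m → ℝ) → ℝ} {s : Fin m → ℝ} {c : ℝ}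
    (h : ∀ x, (∑ i, s i * x i) - f x ≤ c) : conjP f s ≤ (c : EReal) :=
  iSup_le fun x => EReal.coe_le_coe_iff.mpr (h x)

lemma pairing_swap {n d : ℕ} (A : Matrix (Fin n) (Fin d) ℝ) (u : Fin n → ℝ) (v : Fin d → ℝ) :
    ∑ j, Aᵀ.mulVec u j * v j = ∑ i, u i * A.mulVec v i := by
  have h1 : Aᵀ.mulVec u ⬝ᵥ v = u ⬝ᵥ A.mulVec v := by
    rw [Matrix.mulVec_transpose, ← Matrix.dotProduct_mulVec]
  simpa [dotProduct] using h1

lemma exists_good_u {n d : ℕ} (f : (Fin n → ℝ) → ℝ) (g : (Fin d → ℝ) → ℝ)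
    (hf : ConvexOn ℝ Set.univ f) (hg : ConvexOn ℝ Set.univ g)
    (A : Matrix (Fin n) (Fin d) ℝ) (vstar : Fin d → ℝ)
    (hprimal : ∀ v, f (A.mulVec vstar) + g vstar ≤ f (A.mulVec v) + g v) :
    ∃ u : Fin n → ℝ, ∀ x v,
      f (A.mulVec vstar) + g vstar ≤
        f x + g v + (∑ i, u i * x i) - (∑ i, u i * (A.mulVec v) i) := by
  set m : ℝ := f (A.mulVec vstar) + g vstar with hm
  have hfc : Continuous f := by
    rw [← continuousOn_univ]; exact hf.continuousOn isOpen_univ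
  set S : Set ((Fin n → ℝ) × ℝ) := {p | ∃ v, f (A.mulVec v + p.1) + g v < p.2} with hS
  have hSopen : IsOpen S := by
    have : S = ⋃ v, {p : (Fin n → ℝ) × ℝ | f (A.mulVec v + p.1) + g v < p.2} := by
      ext p; simp [hS]
    rw [this]
    refine isOpen_iUnion fun v => ?_
    exact isOpen_lt (by fun_prop) continuous_snd
  have hSconv : Convex ℝ S := by
    rintro ⟨y₁, t₁⟩ ⟨v₁, hv₁⟩ ⟨y₂, t₂⟩ ⟨v₂, hv₂⟩ a b ha hb hab
    refine ⟨a • v₁ + b • v₂, ?_⟩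
    simp only [Prod.smul_mk, Prod.mk_add_mk, smul_eq_mul]
    have e1 : A.mulVec (a • v₁ + b • v₂) + (a • y₁ + b • y₂)
        = a • (A.mulVec v₁ + y₁) + b • (A.mulVec v₂ + y₂) := by
      rw [Matrix.mulVec_add, Matrix.mulVec_smul, Matrix.mulVec_smul]
      module
    rw [e1]
    have h1 := hf.2 (Set.mem_univ (A.mulVec v₁ + y₁)) (Set.mem_univ (A.mulVec v₂ + y₂)) ha hb hab
    have h2 := hg.2 (Set.mem_univ v₁) (Set.mem_univ v₂) ha hb hab
    simp only [smul_eq_mul] at h1 h2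
    have key : a * f (A.mulVec v₁ + y₁) + b * f (A.mulVec v₂ + y₂)
        + (a * g v₁ + b * g v₂) < a * t₁ + b * t₂ := by
      rcases ha.eq_or_lt with rfl0 | hapos
      · have hb1 : b = 1 := by linarith
        rw [← rfl0, hb1]; simpa using hv₂
      · nlinarith [mul_lt_mul_of_pos_left hv₁ hapos, mul_le_mul_of_nonneg_left hv₂.le hb]
    calc f (a • (A.mulVec v₁ + y₁) + b • (A.mulVec v₂ + y₂)) + g (a • v₁ + b • v₂)
        ≤ (a * f (A.mulVec v₁ + y₁) + b * f (A.mulVec v₂ + y₂)) + (a * g v₁ + b * g v₂) :=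
          add_le_add h1 h2
      _ < a * t₁ + b * t₂ := by linarith
  have hnotmem : ((0 : Fin n → ℝ), m) ∉ S := by
    rintro ⟨v, hv⟩
    simp only [add_zero] at hv
    exact absurd (hprimal v) (by linarith)
  obtain ⟨L, hL⟩ := geometric_hahn_banach_open_point hSconv hSopen hnotmem
  set r : ℝ := L ((0 : Fin n → ℝ), (1 : ℝ)) with hr
  have hL0m : L ((0 : Fin n → ℝ), m) = m * r := by
    have : ((0 : Fin n → ℝ), m) = m • ((0 : Fin n → ℝ), (1 : ℝ)) := by
      simp [Prod.smul_mk]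
    rw [this, L.map_smul]; simp [hr]
  have hrneg : r < 0 := by
    have hmem : ((0 : Fin n → ℝ), m + 1) ∈ S := ⟨vstar, by simp [hm]⟩
    have := hL _ hmem
    have e : L ((0 : Fin n → ℝ), m + 1) = m * r + r := by
      have : ((0 : Fin n → ℝ), m + 1) = ((0 : Fin n → ℝ), m) + ((0 : Fin n → ℝ), (1:ℝ)) := by
        simp
      rw [this, map_add, hL0m]
    rw [e, hL0m] at this
    linarith
  -- basic inequality: for all y v, L (y,0) + (f (Av+y)+g v) * r ≤ m * r
  have hbase : ∀ (y : Fin n → ℝ) (v : Fin d → ℝ),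
      L (y, 0) + (f (A.mulVec v + y) + g v) * r ≤ m * r := by
    intro y v
    set c : ℝ := f (A.mulVec v + y) + g v with hc
    have hLt : ∀ t : ℝ, c < t → L (y, 0) + t * r < m * r := by
      intro t ht
      have hmem : (y, t) ∈ S := ⟨v, ht⟩
      have := hL _ hmem
      have e : L (y, t) = L (y, 0) + t * r := by
        have : (y, t) = ((y, (0:ℝ)) : (Fin n → ℝ) × ℝ) + t • ((0 : Fin n → ℝ), (1:ℝ)) := by
          simp
        rw [this, map_add, L.map_smul]; simp [hr]
      rw [e, hL0m] at this
      exact this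
    by_contra hcon
    push_neg at hcon
    set δ : ℝ := L (y, 0) + c * r - m * r with hδ
    have hδpos : 0 < δ := by linarith
    have hpos : 0 < δ / (2 * (-r)) := div_pos hδpos (by linarith)
    have h2 := hLt (c + δ / (2 * (-r))) (by linarith)
    have hεr : (δ / (2 * (-r))) * r = -(δ / 2) := by
      have hr0 : r ≠ 0 := ne_of_lt hrneg
      field_simp
    nlinarith [h2]
  -- now build u from the linear functional
  set T : (Fin n → ℝ) →ₗ[ℝ] ℝ := (L.toLinearMap).comp (LinearMap.inl ℝ (Fin n → ℝ) ℝ) with hT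
  have hTy : ∀ y : Fin n → ℝ, T y = L (y, 0) := fun y => rfl
  set u : Fin n → ℝ := fun i => T (fun j => if i = j then 1 else 0) / r with hu
  have hLy : ∀ y : Fin n → ℝ, L (y, 0) = ∑ i, y i * (u i * r) := by
    intro y
    rw [← hTy, T.pi_apply_eq_sum_univ y]
    refine Finset.sum_congr rfl fun i _ => ?_
    have hui : u i * r = T (fun j => if i = j then 1 else 0) :=
      div_mul_cancel₀ _ (ne_of_lt hrneg)
    rw [smul_eq_mul, hui]
  refine ⟨u, fun x v => ?_⟩
  have hb := hbase (x - A.mulVec v) v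
  rw [add_sub_cancel] at hb
  rw [hLy] at hb
  have hsum : ∑ i, (x - A.mulVec v) i * (u i * r)
      = ((∑ i, u i * x i) - ∑ i, u i * (A.mulVec v) i) * r := by
    rw [sub_mul, Finset.sum_mul, Finset.sum_mul, ← Finset.sum_sub_distrib]
    refine Finset.sum_congr rfl fun i _ => ?_
    simp only [Pi.sub_apply]
    ring
  rw [hsum] at hb
  -- hb : (S - S')*r + (f x + g v)*r ≤ m*r ; divide by r < 0
  by_contra hcon2
  push_neg at hcon2
  have h3 := mul_lt_mul_of_neg_right hcon2 hrneg
  nlinarith [h3, hb]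

lemma sum_neg_mul {n : ℕ} (u w : Fin n → ℝ) :
    ∑ i, (-u) i * w i = -∑ i, u i * w i := by
  simp [neg_mul]

/-- Fenchel's duality theorem (finite-valued case, optima attained). -/
theorem stmt18 {n d : ℕ} (f : (Fin n → ℝ) → ℝ) (g : (Fin d → ℝ) → ℝ)
    (hf : ConvexOn ℝ Set.univ f) (hg : ConvexOn ℝ Set.univ g)
    (A : Matrix (Fin n) (Fin d) ℝ)
    (vstar : Fin d → ℝ) (ustar : Fin n → ℝ)
    (hprimal : ∀ v, f (A.mulVec vstar) + g vstar ≤ f (A.mulVec v) + g v)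
    (hdual : ∀ u : Fin n → ℝ,
      -conjP f (-u) - conjP g (Aᵀ.mulVec u) ≤ -conjP f (-ustar) - conjP g (Aᵀ.mulVec ustar)) :
    ((f (A.mulVec vstar) + g vstar : ℝ) : EReal) =
        -conjP f (-ustar) - conjP g (Aᵀ.mulVec ustar) ∧
      (-ustar) ∈ subdR f (A.mulVec vstar) ∧
      vstar ∈ subdE (conjP g) (Aᵀ.mulVec ustar) := by
  set m : ℝ := f (A.mulVec vstar) + g vstar with hm
  obtain ⟨u, hu⟩ := exists_good_u f g hf hg A vstar hprimal
  -- the dual value at u equals m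
  set a₀ : ℝ := ∑ i, (-u) i * (A.mulVec vstar) i - f (A.mulVec vstar) with ha₀
  set b₀ : ℝ := ∑ j, Aᵀ.mulVec u j * vstar j - g vstar with hb₀
  have hA : conjP f (-u) = (a₀ : EReal) := by
    refine le_antisymm (conjP_le fun x => ?_) (conjP_ge f (-u) (A.mulVec vstar))
    have h1 := hu x vstar
    rw [ha₀, sum_neg_mul, sum_neg_mul]
    linarith
  have hB : conjP g (Aᵀ.mulVec u) = (b₀ : EReal) := by
    refine le_antisymm (conjP_le fun v => ?_) (conjP_ge g (Aᵀ.mulVec u) vstar)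
    have h1 := hu (A.mulVec vstar) v
    rw [hb₀, pairing_swap, pairing_swap]
    linarith
  have hdu : -conjP f (-u) - conjP g (Aᵀ.mulVec u) = (m : EReal) := by
    rw [hA, hB, ← EReal.coe_neg, ← EReal.coe_sub, EReal.coe_eq_coe_iff]
    rw [ha₀, hb₀, sum_neg_mul, pairing_swap, hm]
    ring
  -- weak duality at ustar
  set F := conjP f (-ustar) with hF
  set G := conjP g (Aᵀ.mulVec ustar) with hG
  set p : ℝ := ∑ i, (-ustar) i * (A.mulVec vstar) i - f (A.mulVec vstar) with hp
  set q : ℝ := ∑ j, Aᵀ.mulVec ustar j * vstar j - g vstar with hq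
  have hFge : (p : EReal) ≤ F := conjP_ge f (-ustar) (A.mulVec vstar)
  have hGge : (q : EReal) ≤ G := conjP_ge g (Aᵀ.mulVec ustar) vstar
  have hpq : p + q = -m := by
    rw [hp, hq, sum_neg_mul, pairing_swap, hm]; ring
  have hweak : -F - G ≤ (m : EReal) := by
    have h1 : -F ≤ ((-p : ℝ) : EReal) := by
      rw [EReal.coe_neg]; exact EReal.neg_le_neg_iff.mpr hFge
    have h2 : -G ≤ ((-q : ℝ) : EReal) := by
      rw [EReal.coe_neg]; exact EReal.neg_le_neg_iff.mpr hGge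
    calc -F - G ≤ ((-p : ℝ) : EReal) + ((-q : ℝ) : EReal) := add_le_add h1 h2
      _ = (m : EReal) := by rw [← EReal.coe_add]; norm_cast; linarith
  have h1 : (m : EReal) = -F - G := le_antisymm (hdu ▸ hdual u) hweak
  -- finiteness of F and G
  have hFnb : F ≠ ⊥ := fun h => by rw [h] at hFge; exact (EReal.coe_ne_bot p) (le_bot_iff.mp hFge)
  have hGnb : G ≠ ⊥ := fun h => by rw [h] at hGge; exact (EReal.coe_ne_bot q) (le_bot_iff.mp hGge)
  have hFnt : F ≠ ⊤ := by
    intro h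
    rw [h] at h1
    simp only [EReal.neg_top] at h1
    rw [sub_eq_add_neg, EReal.bot_add] at h1
    exact EReal.coe_ne_bot m h1
  have hGnt : G ≠ ⊤ := by
    intro h
    rw [h] at h1
    simp only [EReal.neg_top, sub_eq_add_neg] at h1
    rw [EReal.add_bot] at h1
    exact EReal.coe_ne_bot m h1
  obtain ⟨a, hFa⟩ : ∃ a : ℝ, F = (a : EReal) := ⟨F.toReal, (EReal.coe_toReal hFnt hFnb).symm⟩
  obtain ⟨b, hGb⟩ : ∃ b : ℝ, G = (b : EReal) := ⟨G.toReal, (EReal.coe_toReal hGnt hGnb).symm⟩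
  have hab : m = -a - b := by
    rw [hFa, hGb, ← EReal.coe_neg, ← EReal.coe_sub, EReal.coe_eq_coe_iff] at h1
    exact h1
  have hpa : p ≤ a := by rw [hFa] at hFge; exact EReal.coe_le_coe_iff.mp hFge
  have hqb : q ≤ b := by rw [hGb] at hGge; exact EReal.coe_le_coe_iff.mp hGge
  have hap : a = p := by linarith
  have hbq : b = q := by linarith
  refine ⟨h1, ?_, ?_⟩
  · simp only [subdR, Set.mem_setOf_eq]
    intro x'
    have h2 := conjP_ge f (-ustar) x'
    rw [← hF, hFa] at h2
    have h3 : ∑ i, (-ustar) i * x' i - f x' ≤ a := EReal.coe_le_coe_iff.mp h2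
    have h4 : ∑ i, (-ustar) i * (x' i - A.mulVec vstar i)
        = ∑ i, (-ustar) i * x' i - ∑ i, (-ustar) i * (A.mulVec vstar) i := by
      rw [← Finset.sum_sub_distrib]
      exact Finset.sum_congr rfl fun i _ => by ring
    rw [ge_iff_le, h4]
    rw [hap, hp] at h3
    linarith
  · simp only [subdE, Set.mem_setOf_eq]
    intro s'
    rw [← hG, hGb, ← EReal.coe_add]
    have h2 := conjP_ge g s' vstar
    refine le_trans ?_ h2
    rw [EReal.coe_le_coe_iff]
    have h4 : ∑ j, vstar j * (s' j - Aᵀ.mulVec ustar j)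
        = ∑ j, s' j * vstar j - ∑ j, Aᵀ.mulVec ustar j * vstar j := by
      rw [← Finset.sum_sub_distrib]
      exact Finset.sum_congr rfl fun j _ => by ring
    rw [h4, hbq, hq]
    linarith
end
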